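/- Let Γ ↷ X and Λ ↷ Y be actions of countable discrete groups on second-countable locally compact Hausdorff spaces (not assumed topologically free), let h : X → Y be a homeomorphism and φ : X × Γ → Λ a continuous cocycle. Then the following are equivalent: (a) (h,φ) preserves stabilizers and there is a continuous map η : Y × Λ → Γ such that (h,φ,η) is a continuous orbit equivalence; (b) (h,φ) preserves essential stabilizers and there is a continuous map η : Y × Λ → Γ such that (h,φ,η) is a continuous orbit equivalence. -/

import Mathlib

open Set

variable {X Y Γ Λ : Type*}

/-- The stabilizer of `x` for a right action `a : X → Γ → X`. -/
def Stab (a : X → Γ → X) (x : X) : Set Γ := {γ | a x γ = x}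

/-- The essential stabilizer of `x`: elements acting as the identity on a
neighbourhood of `x`. -/
def StabEss [TopologicalSpace X] (a : X → Γ → X) (x : X) : Set Γ :=
  {γ | ∃ U : Set X, IsOpen U ∧ x ∈ U ∧ ∀ y ∈ U, a y γ = y}

/-- The action is topologically free if the points with trivial stabilizer are dense. -/
def TopFree [TopologicalSpace X] [One Γ] (a : X → Γ → X) : Prop :=
  Dense {x : X | ∀ γ : Γ, a x γ = x → γ = 1}

/-- `φ : X × Γ → Λ` is a cocycle for the action `a`. -/
def IsCocycle [Mul Γ] [Mul Λ] (a : X → Γ → X) (φ : X × Γ → Λ) : Prop :=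
  ∀ (x : X) (γ γ' : Γ), φ (x, γ * γ') = φ (x, γ) * φ (a x γ, γ')

/-- `(h, φ, η)` is a continuous orbit equivalence between the right actions
`a : X → Γ → X` and `b : Y → Λ → Y`. -/
def IsCOE [TopologicalSpace X] [TopologicalSpace Y] [TopologicalSpace Γ] [TopologicalSpace Λ]
    (a : X → Γ → X) (b : Y → Λ → Y) (h : X ≃ₜ Y) (φ : X × Γ → Λ) (η : Y × Λ → Γ) : Prop :=
  Continuous φ ∧ Continuous η ∧
    (∀ (x : X) (γ : Γ), h (a x γ) = b (h x) (φ (x, γ))) ∧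
    (∀ (y : Y) (lam : Λ), h.symm (b y lam) = a (h.symm y) (η (y, lam)))

/-- `(h, φ)` preserves stabilizers. -/
def PreservesStab [TopologicalSpace X] [TopologicalSpace Y]
    (a : X → Γ → X) (b : Y → Λ → Y) (h : X ≃ₜ Y) (φ : X × Γ → Λ) : Prop :=
  ∀ x : X, Set.BijOn (fun γ => φ (x, γ)) (Stab a x) (Stab b (h x))

/-- `(h, φ)` preserves essential stabilizers. -/
def PreservesStabEss [TopologicalSpace X] [TopologicalSpace Y]
    (a : X → Γ → X) (b : Y → Λ → Y) (h : X ≃ₜ Y) (φ : X × Γ → Λ) : Prop :=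
  ∀ x : X, Set.BijOn (fun γ => φ (x, γ)) (StabEss a x) (StabEss b (h x))

theorem stmt4 [TopologicalSpace X] [SecondCountableTopology X] [LocallyCompactSpace X] [T2Space X]
    [TopologicalSpace Y] [SecondCountableTopology Y] [LocallyCompactSpace Y] [T2Space Y]
    [Group Γ] [Countable Γ] [TopologicalSpace Γ] [DiscreteTopology Γ]
    [Group Λ] [Countable Λ] [TopologicalSpace Λ] [DiscreteTopology Λ]
    (a : X → Γ → X) (b : Y → Λ → Y)
    (ha1 : ∀ x : X, a x 1 = x) (ha2 : ∀ (x : X) (γ γ' : Γ), a (a x γ) γ' = a x (γ * γ'))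
    (hacont : Continuous fun p : X × Γ => a p.1 p.2)
    (hb1 : ∀ y : Y, b y 1 = y) (hb2 : ∀ (y : Y) (lam mu : Λ), b (b y lam) mu = b y (lam * mu))
    (hbcont : Continuous fun p : Y × Λ => b p.1 p.2)
    (h : X ≃ₜ Y) (φ : X × Γ → Λ)
    (hφ : Continuous φ) (hφcoc : IsCocycle a φ) :
    (PreservesStab a b h φ ∧ ∃ η : Y × Λ → Γ, IsCOE a b h φ η) ↔
      (PreservesStabEss a b h φ ∧ ∃ η : Y × Λ → Γ, IsCOE a b h φ η) := by
  -- basic helpers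
  have stabOfEss : ∀ (x : X) (γ : Γ), γ ∈ StabEss a x → γ ∈ Stab a x := by
    rintro x γ ⟨U, _, hxU, hfix⟩; exact hfix x hxU
  have stabOfEssB : ∀ (y : Y) (lam : Λ), lam ∈ StabEss b y → lam ∈ Stab b y := by
    rintro y lam ⟨U, _, hyU, hfix⟩; exact hfix y hyU
  have essOneB : ∀ y : Y, (1 : Λ) ∈ StabEss b y :=
    fun y => ⟨univ, isOpen_univ, mem_univ y, fun z _ => hb1 z⟩
  have essInvB : ∀ (y : Y) (lam : Λ), lam ∈ StabEss b y → lam⁻¹ ∈ StabEss b y := by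
    rintro y lam ⟨U, hU, hyU, hfix⟩
    refine ⟨U, hU, hyU, fun z hz => ?_⟩
    have hz' := hfix z hz
    calc b z lam⁻¹ = b (b z lam) lam⁻¹ := by rw [hz']
      _ = b z (lam * lam⁻¹) := hb2 z lam lam⁻¹
      _ = z := by rw [mul_inv_cancel, hb1]
  have φ1 : ∀ x : X, φ (x, 1) = 1 := by
    intro x
    have hc := hφcoc x 1 1
    rw [one_mul, ha1] at hc
    exact left_eq_mul.mp hc
  have locφ : ∀ (γ : Γ) (x : X), IsOpen {z : X | φ (z, γ) = φ (x, γ)} := by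
    intro γ x
    have hcont : Continuous fun z : X => φ (z, γ) :=
      hφ.comp (continuous_id.prodMk continuous_const)
    exact (isOpen_discrete {φ (x, γ)}).preimage hcont
  -- main equivalence, given any COE
  have key : ∀ η : Y × Λ → Γ, IsCOE a b h φ η →
      (PreservesStab a b h φ ↔ PreservesStabEss a b h φ) := by
    rintro η ⟨-, hηc, H1, H2⟩
    have locη : ∀ (lam : Λ) (y : Y), IsOpen {z : Y | η (z, lam) = η (y, lam)} := by
      intro lam y
      have hcont : Continuous fun z : Y => η (z, lam) :=
        hηc.comp (continuous_id.prodMk continuous_const)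
      exact (isOpen_discrete {η (y, lam)}).preimage hcont
    -- the key correspondence between essential stabilizers
    have essIff : ∀ (x : X) (γ : Γ), γ ∈ StabEss a x ↔ φ (x, γ) ∈ StabEss b (h x) := by
      intro x γ
      constructor
      · rintro ⟨U, hU, hxU, hfix⟩
        refine ⟨h '' (U ∩ {z : X | φ (z, γ) = φ (x, γ)}),
          h.isOpenMap _ (hU.inter (locφ γ x)), ⟨x, ⟨hxU, rfl⟩, rfl⟩, ?_⟩
        rintro w ⟨z, ⟨hzU, hzφ⟩, rfl⟩
        calc b (h z) (φ (x, γ)) = b (h z) (φ (z, γ)) := by rw [hzφ]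
          _ = h (a z γ) := (H1 z γ).symm
          _ = h z := by rw [hfix z hzU]
      · rintro ⟨V, hV, hyV, hfix⟩
        refine ⟨{z : X | φ (z, γ) = φ (x, γ)} ∩ h ⁻¹' V,
          (locφ γ x).inter (hV.preimage h.continuous), ⟨rfl, hyV⟩, ?_⟩
        rintro z ⟨hzφ, hzV⟩
        have : h (a z γ) = h z := by
          calc h (a z γ) = b (h z) (φ (z, γ)) := H1 z γ
            _ = b (h z) (φ (x, γ)) := by rw [hzφ]
            _ = h z := hfix (h z) hzV
        exact h.injective this
    -- φ(x,·) always maps Stab into Stab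
    have stabMaps : ∀ (x : X) (γ : Γ), γ ∈ Stab a x → φ (x, γ) ∈ Stab b (h x) := by
      intro x γ hγ
      have : h (a x γ) = b (h x) (φ (x, γ)) := H1 x γ
      rw [hγ] at this
      exact this.symm
    constructor
    · -- Stab preserved → StabEss preserved
      intro hps x
      refine ⟨fun γ hγ => (essIff x γ).mp hγ, (hps x).injOn.mono (fun γ hγ => stabOfEss x γ hγ), ?_⟩
      intro mu hmu
      obtain ⟨γ, hγ, hfγ⟩ := (hps x).surjOn (stabOfEssB (h x) mu hmu)
      refine ⟨γ, (essIff x γ).mpr ?_, hfγ⟩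
      simp only at hfγ
      rw [hfγ]; exact hmu
    · -- StabEss preserved → Stab preserved
      intro hps x
      refine ⟨stabMaps x, ?_, ?_⟩
      · -- injectivity on Stab
        intro γ hγ γ' hγ' heq
        simp only at heq
        have hγinv : a x γ⁻¹ = x := by
          conv_lhs => rw [← hγ]
          rw [ha2, mul_inv_cancel, ha1]
        have hσstab : γ⁻¹ * γ' ∈ Stab a x := by
          show a x (γ⁻¹ * γ') = x
          rw [← ha2, hγinv]; exact hγ'
        have hσφ : φ (x, γ⁻¹ * γ') = 1 := by
          have hc := hφcoc x γ (γ⁻¹ * γ')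
          rw [← mul_assoc, mul_inv_cancel, one_mul, hγ] at hc
          have : φ (x, γ) * 1 = φ (x, γ) * φ (x, γ⁻¹ * γ') := by
            rw [mul_one, ← hc]; exact heq
          exact (mul_left_cancel this).symm
        have hσess : γ⁻¹ * γ' ∈ StabEss a x := by
          apply (essIff x _).mpr
          rw [hσφ]; exact essOneB (h x)
        have h1ess : (1 : Γ) ∈ StabEss a x :=
          ⟨univ, isOpen_univ, mem_univ x, fun z _ => ha1 z⟩
        have : γ⁻¹ * γ' = 1 := (hps x).injOn hσess h1ess (by simp only [hσφ, φ1 x])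
        calc γ = γ * (γ⁻¹ * γ') := by rw [this, mul_one]
          _ = γ' := by rw [← mul_assoc, mul_inv_cancel, one_mul]
      · -- surjectivity onto Stab
        intro mu hmu
        have hmu' : b (h x) mu = h x := hmu
        set y := h x with hy
        set γ₀ : Γ := η (y, mu) with hγ₀
        have hγ₀stab : a x γ₀ = x := by
          have := H2 y mu
          rw [hmu'] at this
          simpa [hy, h.symm_apply_apply] using this.symm
        set lam₀ : Λ := φ (x, γ₀) with hlam₀
        -- the element mu⁻¹ * lam₀ is an essential stabilizer of y
        have hτess : mu⁻¹ * lam₀ ∈ StabEss b y := by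
          set V : Set Y := {z : Y | η (z, mu) = η (y, mu)} ∩ h.symm ⁻¹' {z : X | φ (z, γ₀) = φ (x, γ₀)} with hV
          have hVopen : IsOpen V := (locη mu y).inter ((locφ γ₀ x).preimage h.symm.continuous)
          have hyV : y ∈ V := ⟨rfl, by simp [hy, h.symm_apply_apply]⟩
          -- on V, b z lam₀ = b z mu
          have hkey : ∀ z ∈ V, b z lam₀ = b z mu := by
            rintro z ⟨hz1, hz2⟩
            have hid : h.symm (b z mu) = a (h.symm z) (η (z, mu)) := H2 z mu
            have : h (a (h.symm z) (η (z, mu))) = b z (φ (h.symm z, η (z, mu))) := by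
              have := H1 (h.symm z) (η (z, mu))
              rwa [h.apply_symm_apply] at this
            rw [← hid, h.apply_symm_apply] at this
            have hz1' : η (z, mu) = γ₀ := hz1
            have hz2' : φ (h.symm z, γ₀) = lam₀ := hz2
            rw [hz1', hz2'] at this
            exact this.symm
          refine ⟨(fun z : Y => b z mu⁻¹) ⁻¹' V,
            hVopen.preimage (hbcont.comp (continuous_id.prodMk continuous_const)), ?_, ?_⟩
          · show b y mu⁻¹ ∈ V
            have : b y mu⁻¹ = y := by
              conv_lhs => rw [← hmu']
              rw [hb2, mul_inv_cancel, hb1]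
            rw [this]; exact hyV
          · intro w hw
            have hzV : b w mu⁻¹ ∈ V := hw
            have := hkey _ hzV
            calc b w (mu⁻¹ * lam₀) = b (b w mu⁻¹) lam₀ := (hb2 w mu⁻¹ lam₀).symm
              _ = b (b w mu⁻¹) mu := this
              _ = b w (mu⁻¹ * mu) := hb2 w mu⁻¹ mu
              _ = w := by rw [inv_mul_cancel, hb1]
        obtain ⟨δ, hδess, hδφ⟩ := (hps x).surjOn (essInvB y _ hτess)
        simp only at hδφ
        refine ⟨γ₀ * δ, ?_, ?_⟩
        · show a x (γ₀ * δ) = x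
          rw [← ha2, hγ₀stab]
          exact stabOfEss x δ hδess
        · show φ (x, γ₀ * δ) = mu
          rw [hφcoc x γ₀ δ, hγ₀stab, hδφ, ← hlam₀]
          rw [mul_inv_rev, inv_inv, ← mul_assoc, mul_inv_cancel, one_mul]
  constructor
  · rintro ⟨hps, η, hcoe⟩
    exact ⟨(key η hcoe).mp hps, η, hcoe⟩
  · rintro ⟨hps, η, hcoe⟩
    exact ⟨(key η hcoe).mpr hps, η, hcoe⟩
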